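/- A semigroup S is a rectangular group if and only if every element of S is regular and the set E(S) of idempotents of S is a rectangular band, i.e., E(S) is closed under multiplication and e·f·e = e for all e, f ∈ E(S). -/

import Mathlib

universe u

/-- A witness that the semigroup `S` is a rectangular group: an isomorphism of `S` with a
direct product `U × V × G` of a left-zero semigroup `U`, a right-zero semigroup `V`
and a group `G`. -/
structure RectangularGroupWitness (S : Type u) [Mul S] where
  U : Type u
  V : Type u
  G : Type u
  [semU : Semigroup U]
  [semV : Semigroup V]
  [grpG : Group G]
  left_zero : ∀ x y : U, x * y = x
  right_zero : ∀ x y : V, x * y = y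
  iso : S ≃* U × V × G

/-- `S` is a rectangular group if it is isomorphic to `U × V × G` with `U` left-zero,
`V` right-zero and `G` a group. -/
def IsRectangularGroup (S : Type u) [Mul S] : Prop :=
  Nonempty (RectangularGroupWitness S)

namespace RectAux

variable {S : Type u} [Semigroup S]

abbrev Uc (e0 : S) : Type u := {e : S // e * e = e ∧ e * e0 = e}
abbrev Vc (e0 : S) : Type u := {e : S // e * e = e ∧ e0 * e = e}
abbrev Gc (e0 : S) : Type u := {g : S // e0 * g = g ∧ g * e0 = g}

variable {e0 : S}

section
variable (he0 : e0 * e0 = e0)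
  (hE : ∀ e f : S, e * e = e → f * f = f → (e * f) * (e * f) = e * f ∧ e * f * e = e)
include he0 hE

theorem fixpt {k : S} (hk : k * k = k) (h1 : e0 * k = k) (h2 : k * e0 = k) : k = e0 := by
  have h := (hE e0 k he0 hk).2
  rw [h1, h2] at h
  exact h

theorem L1 {e : S} (he : e * e = e) (he' : e * e0 = e) : e0 * e = e0 := by
  calc e0 * e = e0 * (e * e0) := by rw [he']
    _ = e0 * e * e0 := by rw [mul_assoc]
    _ = e0 := (hE e0 e he0 he).2

theorem L2 {e : S} (he : e * e = e) (he' : e0 * e = e) : e * e0 = e0 := by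
  calc e * e0 = (e0 * e) * e0 := by rw [he']
    _ = e0 := (hE e0 e he0 he).2

theorem leftzero_val {e f : S} (he : e * e = e) (he' : e * e0 = e)
    (hf : f * f = f) (hf' : f * e0 = f) : e * f = e := by
  have h0 : e0 * e = e0 := L1 he0 hE he he'
  calc e * f = e * (f * e0) := by rw [hf']
    _ = e * (f * (e0 * e)) := by rw [h0]
    _ = e * f * e := by rw [← mul_assoc, ← mul_assoc, mul_assoc e f e0, hf']
    _ = e := (hE e f he hf).2

theorem rightzero_val {e f : S} (he : e * e = e) (he' : e0 * e = e)
    (hf : f * f = f) (hf' : e0 * f = f) : e * f = f := by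
  have h0 : e * e0 = e0 := L2 he0 hE he he'
  calc e * f = e * (e0 * f) := by rw [hf']
    _ = (e * e0) * f := by rw [mul_assoc]
    _ = e0 * f := by rw [h0]
    _ = f := hf'

theorem VU_val {f e : S} (hf : f * f = f) (hf' : e0 * f = f)
    (he : e * e = e) (he' : e * e0 = e) : f * e = e0 := by
  refine fixpt he0 hE (hE f e hf he).1 ?_ ?_
  · rw [← mul_assoc, hf']
  · rw [mul_assoc, he']

end

section
variable (he0 : e0 * e0 = e0)
  (hE : ∀ e f : S, e * e = e → f * f = f → (e * f) * (e * f) = e * f ∧ e * f * e = e)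
  (hreg : ∀ x : S, ∃ u : S, x = x * u * x)

def semU : Semigroup (Uc e0) where
  mul e f := ⟨e.1 * f.1, (hE _ _ e.2.1 f.2.1).1, by rw [mul_assoc, f.2.2]⟩
  mul_assoc a b c := Subtype.ext (mul_assoc a.1 b.1 c.1)

def semV : Semigroup (Vc e0) where
  mul e f := ⟨e.1 * f.1, (hE _ _ e.2.1 f.2.1).1, by rw [← mul_assoc, e.2.2]⟩
  mul_assoc a b c := Subtype.ext (mul_assoc a.1 b.1 c.1)

noncomputable def grpG : Group (Gc e0) where
  mul g h := ⟨g.1 * h.1, by rw [← mul_assoc, g.2.1], by rw [mul_assoc, h.2.2]⟩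
  mul_assoc a b c := Subtype.ext (mul_assoc a.1 b.1 c.1)
  one := ⟨e0, he0, he0⟩
  one_mul g := Subtype.ext g.2.1
  mul_one g := Subtype.ext g.2.2
  inv g := ⟨e0 * Classical.choose (hreg g.1) * e0,
    by rw [← mul_assoc, ← mul_assoc, he0],
    by rw [mul_assoc, he0]⟩
  inv_mul_cancel g := by
    apply Subtype.ext
    set a := Classical.choose (hreg g.1) with ha
    have hga : g.1 = g.1 * a * g.1 := Classical.choose_spec (hreg g.1)
    show (e0 * a * e0) * g.1 = e0
    have h1 : (e0 * a * e0) * g.1 = e0 * a * g.1 := by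
      rw [mul_assoc (e0 * a) e0 g.1, g.2.1]
    rw [h1]
    refine fixpt he0 hE ?_ ?_ ?_
    · calc (e0 * a * g.1) * (e0 * a * g.1) = e0 * a * ((g.1 * e0) * (a * g.1)) := by
            simp only [mul_assoc]
        _ = e0 * a * (g.1 * (a * g.1)) := by rw [g.2.2]
        _ = e0 * a * (g.1 * a * g.1) := by rw [mul_assoc g.1 a g.1]
        _ = e0 * a * g.1 := by rw [← hga]
    · rw [← mul_assoc, ← mul_assoc, he0]
    · rw [mul_assoc (e0 * a) g.1 e0, g.2.2]

def psi : Uc e0 × Vc e0 × Gc e0 → S := fun p => p.1.1 * p.2.2.1 * p.2.1.1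

theorem psi_mul_val (he0 : e0 * e0 = e0)
    (hE : ∀ e f : S, e * e = e → f * f = f → (e * f) * (e * f) = e * f ∧ e * f * e = e)
    {e f g e' f' g' : S}
    (heU : e * e = e ∧ e * e0 = e) (heU' : e' * e' = e' ∧ e' * e0 = e')
    (hfV : f * f = f ∧ e0 * f = f) (hfV' : f' * f' = f' ∧ e0 * f' = f')
    (hgG : e0 * g = g ∧ g * e0 = g) (hgG' : e0 * g' = g' ∧ g' * e0 = g') :
    ((e * e') * (g * g')) * (f * f') = (e * g * f) * (e' * g' * f') := by
  have h1 : e * e' = e := leftzero_val he0 hE heU.1 heU.2 heU'.1 heU'.2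
  have h2 : f * f' = f' := rightzero_val he0 hE hfV.1 hfV.2 hfV'.1 hfV'.2
  have h3 : f * e' = e0 := VU_val he0 hE hfV.1 hfV.2 heU'.1 heU'.2
  calc ((e * e') * (g * g')) * (f * f') = (e * (g * g')) * f' := by rw [h1, h2]
    _ = e * (g * (g' * f')) := by simp only [mul_assoc]
    _ = e * ((g * e0) * (g' * f')) := by rw [hgG.2]
    _ = e * (g * ((f * e') * (g' * f'))) := by rw [h3]; simp only [mul_assoc]
    _ = (e * g * f) * (e' * g' * f') := by simp only [mul_assoc]

theorem recover_g (he0 : e0 * e0 = e0)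
    (hE : ∀ e f : S, e * e = e → f * f = f → (e * f) * (e * f) = e * f ∧ e * f * e = e)
    {e f g : S}
    (heU : e * e = e ∧ e * e0 = e) (hfV : f * f = f ∧ e0 * f = f)
    (hgG : e0 * g = g ∧ g * e0 = g) :
    e0 * (e * g * f) * e0 = g := by
  have h1 : e0 * e = e0 := L1 he0 hE heU.1 heU.2
  have h2 : f * e0 = e0 := L2 he0 hE hfV.1 hfV.2
  calc e0 * (e * g * f) * e0 = (e0 * e) * (g * (f * e0)) := by simp only [mul_assoc]
    _ = e0 * (g * e0) := by rw [h1, h2]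
    _ = e0 * g := by rw [hgG.2]
    _ = g := hgG.1

theorem recover_e (he0 : e0 * e0 = e0)
    (hE : ∀ e f : S, e * e = e → f * f = f → (e * f) * (e * f) = e * f ∧ e * f * e = e)
    {e f g h : S}
    (heU : e * e = e ∧ e * e0 = e) (hfV : f * f = f ∧ e0 * f = f)
    (hhG : e0 * h = h ∧ h * e0 = h) (hcan : g * h = e0) :
    (e * g * f) * h = e := by
  have hfh : f * h = h := by
    calc f * h = f * (e0 * h) := by rw [hhG.1]
      _ = (f * e0) * h := by rw [mul_assoc]
      _ = e0 * h := by rw [L2 he0 hE hfV.1 hfV.2]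
      _ = h := hhG.1
  calc (e * g * f) * h = e * (g * (f * h)) := by simp only [mul_assoc]
    _ = e * (g * h) := by rw [hfh]
    _ = e * e0 := by rw [hcan]
    _ = e := heU.2

theorem recover_f (he0 : e0 * e0 = e0)
    (hE : ∀ e f : S, e * e = e → f * f = f → (e * f) * (e * f) = e * f ∧ e * f * e = e)
    {e f g h : S}
    (heU : e * e = e ∧ e * e0 = e) (hfV : f * f = f ∧ e0 * f = f)
    (hhG : e0 * h = h ∧ h * e0 = h) (hcan : h * g = e0) :
    h * (e * g * f) = f := by
  have hhe : h * e = h := by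
    calc h * e = (h * e0) * e := by rw [hhG.2]
      _ = h * (e0 * e) := by rw [mul_assoc]
      _ = h * e0 := by rw [L1 he0 hE heU.1 heU.2]
      _ = h := hhG.2
  calc h * (e * g * f) = (h * e) * (g * f) := by simp only [mul_assoc]
    _ = h * (g * f) := by rw [hhe]
    _ = (h * g) * f := by rw [mul_assoc]
    _ = e0 * f := by rw [hcan]
    _ = f := hfV.2

theorem psi_surj_eq (he0 : e0 * e0 = e0)
    (hE : ∀ e f : S, e * e = e → f * f = f → (e * f) * (e * f) = e * f ∧ e * f * e = e)
    {s a : S} (hsa : s = s * a * s)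
    (hsa1 : (s * a) * (s * a) = s * a) (has1 : (a * s) * (a * s) = a * s) :
    (s * a * e0) * (e0 * s * e0) * (e0 * (a * s)) = s := by
  have hrect_sa : (s * a) * e0 * (s * a) = s * a := (hE (s * a) e0 hsa1 he0).2
  have hrect_as : (a * s) * e0 * (a * s) = a * s := (hE (a * s) e0 has1 he0).2
  have hmid : s = (s * a) * s * (a * s) := by
    rw [mul_assoc (s * a) s (a * s), ← mul_assoc s a s, ← hsa, ← hsa]
  calc (s * a * e0) * (e0 * s * e0) * (e0 * (a * s))
      = (s * a) * (e0 * (e0 * (s * (e0 * (e0 * (a * s)))))) := by simp only [mul_assoc]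
    _ = (s * a) * (e0 * (s * (e0 * (a * s)))) := by
        rw [← mul_assoc e0 e0 (s * (e0 * (e0 * (a * s)))), he0, ← mul_assoc e0 e0 (a * s), he0]
    _ = (s * a) * e0 * s * (e0 * (a * s)) := by simp only [mul_assoc]
    _ = (s * a) * e0 * ((s * a) * s * (a * s)) * (e0 * (a * s)) := by nth_rewrite 2 [hmid]; rfl
    _ = ((s * a) * e0 * (s * a)) * (s * ((a * s) * e0 * (a * s))) := by simp only [mul_assoc]
    _ = (s * a) * (s * (a * s)) := by rw [hrect_sa, hrect_as]
    _ = s := by rw [← mul_assoc, ← hsa, ← mul_assoc, ← hsa]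

end

theorem backward {S : Type u} [Semigroup S] [Nonempty S]
    (hreg : ∀ x : S, ∃ u : S, x = x * u * x)
    (hE : ∀ e f : S, e * e = e → f * f = f →
      (e * f) * (e * f) = e * f ∧ e * f * e = e) :
    IsRectangularGroup S := by
  classical
  obtain ⟨e0, he0⟩ : ∃ e : S, e * e = e := by
    obtain ⟨x0⟩ := (inferInstance : Nonempty S)
    obtain ⟨a0, ha0⟩ := hreg x0
    exact ⟨x0 * a0, by rw [← mul_assoc, ← ha0]⟩
  letI iU : Semigroup (Uc e0) := semU hE
  letI iV : Semigroup (Vc e0) := semV hE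
  letI iG : Group (Gc e0) := grpG he0 hE hreg
  have hmap : ∀ p q : Uc e0 × Vc e0 × Gc e0, psi (p * q) = psi p * psi q := by
    rintro ⟨pe, pf, pg⟩ ⟨qe, qf, qg⟩
    exact psi_mul_val he0 hE pe.2 qe.2 pf.2 qf.2 pg.2 qg.2
  have hinj : Function.Injective (psi (e0 := e0)) := by
    rintro ⟨pe, pf, pg⟩ ⟨qe, qf, qg⟩ hpq
    have hpq' : pe.1 * pg.1 * pf.1 = qe.1 * qg.1 * qf.1 := hpq
    have hg : pg = qg := by
      apply Subtype.ext
      calc pg.1 = e0 * (pe.1 * pg.1 * pf.1) * e0 :=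
            (recover_g he0 hE pe.2 pf.2 pg.2).symm
        _ = e0 * (qe.1 * qg.1 * qf.1) * e0 := by rw [hpq']
        _ = qg.1 := recover_g he0 hE qe.2 qf.2 qg.2
    have hcanp : pg.1 * (pg⁻¹).1 = e0 := congrArg Subtype.val (mul_inv_cancel pg)
    have hcanp' : (pg⁻¹).1 * pg.1 = e0 := congrArg Subtype.val (inv_mul_cancel pg)
    have hcanq : qg.1 * (qg⁻¹).1 = e0 := congrArg Subtype.val (mul_inv_cancel qg)
    have hcanq' : (qg⁻¹).1 * qg.1 = e0 := congrArg Subtype.val (inv_mul_cancel qg)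
    have he : pe = qe := by
      apply Subtype.ext
      calc pe.1 = (pe.1 * pg.1 * pf.1) * (pg⁻¹).1 :=
            (recover_e he0 hE pe.2 pf.2 (pg⁻¹).2 hcanp).symm
        _ = (qe.1 * qg.1 * qf.1) * (qg⁻¹).1 := by rw [hpq', hg]
        _ = qe.1 := recover_e he0 hE qe.2 qf.2 (qg⁻¹).2 hcanq
    have hf : pf = qf := by
      apply Subtype.ext
      calc pf.1 = (pg⁻¹).1 * (pe.1 * pg.1 * pf.1) :=
            (recover_f he0 hE pe.2 pf.2 (pg⁻¹).2 hcanp').symm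
        _ = (qg⁻¹).1 * (qe.1 * qg.1 * qf.1) := by rw [hpq', hg]
        _ = qf.1 := recover_f he0 hE qe.2 qf.2 (qg⁻¹).2 hcanq'
    rw [he, hf, hg]
  have hsurj : Function.Surjective (psi (e0 := e0)) := by
    intro s
    obtain ⟨a, hsa⟩ := hreg s
    have hsa1 : (s * a) * (s * a) = s * a := by rw [← mul_assoc, ← hsa]
    have has1 : (a * s) * (a * s) = a * s := by
      rw [mul_assoc a s (a * s), ← mul_assoc s a s, ← hsa]
    exact ⟨⟨⟨s * a * e0, (hE _ _ hsa1 he0).1, by rw [mul_assoc, he0]⟩,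
            ⟨e0 * (a * s), (hE _ _ he0 has1).1, by rw [← mul_assoc, he0]⟩,
            ⟨e0 * s * e0, by rw [← mul_assoc, ← mul_assoc, he0], by rw [mul_assoc, he0]⟩⟩,
          psi_surj_eq he0 hE hsa hsa1 has1⟩
  exact ⟨⟨Uc e0, Vc e0, Gc e0,
    fun x y => Subtype.ext (leftzero_val he0 hE x.2.1 x.2.2 y.2.1 y.2.2),
    fun x y => Subtype.ext (rightzero_val he0 hE x.2.1 x.2.2 y.2.1 y.2.2),
    (MulEquiv.mk (Equiv.ofBijective _ ⟨hinj, hsurj⟩) hmap).symm⟩⟩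

end RectAux


/-- A semigroup `S` is a rectangular group if and only if every element of `S` is regular
and the set of idempotents of `S` is a rectangular band, i.e. it is closed under
multiplication and `e·f·e = e` for all idempotents `e, f`. -/
theorem isRectangularGroup_iff_regular_and_idempotents_rectangular_band
    {S : Type u} [Semigroup S] [Nonempty S] :
    IsRectangularGroup S ↔
      ((∀ x : S, ∃ u : S, x = x * u * x) ∧
        (∀ e f : S, e * e = e → f * f = f →
          (e * f) * (e * f) = e * f ∧ e * f * e = e)) := by
  constructor
  · rintro ⟨w⟩
    letI := w.semU
    letI := w.semV
    letI := w.grpG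
    constructor
    · intro x
      refine ⟨w.iso.symm ((w.iso x).1, (w.iso x).2.1, (w.iso x).2.2⁻¹), ?_⟩
      apply w.iso.injective
      rw [map_mul, map_mul, MulEquiv.apply_symm_apply]
      refine Prod.ext ?_ (Prod.ext ?_ ?_)
      · simp [w.left_zero]
      · simp [w.right_zero]
      · simp
    · intro e f he hf
      have hge : (w.iso e).2.2 = 1 := by
        have h : (w.iso e).2.2 * (w.iso e).2.2 = (w.iso e).2.2 := by
          have := congrArg (fun p => p.2.2) (by rw [← map_mul, he] :
            w.iso e * w.iso e = w.iso e)
          simpa using this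
        exact mul_eq_left.mp h
      have hgf : (w.iso f).2.2 = 1 := by
        have h : (w.iso f).2.2 * (w.iso f).2.2 = (w.iso f).2.2 := by
          have := congrArg (fun p => p.2.2) (by rw [← map_mul, hf] :
            w.iso f * w.iso f = w.iso f)
          simpa using this
        exact mul_eq_left.mp h
      constructor
      · apply w.iso.injective
        simp only [map_mul]
        refine Prod.ext ?_ (Prod.ext ?_ ?_)
        · simp [w.left_zero]
        · simp [w.right_zero]
        · simp [hge, hgf]
      · apply w.iso.injective
        simp only [map_mul]
        refine Prod.ext ?_ (Prod.ext ?_ ?_)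
        · simp [w.left_zero]
        · simp [w.right_zero]
        · simp [hge, hgf]
  · rintro ⟨hreg, hE⟩
    exact RectAux.backward hreg hE
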